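/- Let σ, α, W, v, t > 0 and set H = √(αWv/(πσ²)). Then ∫_{ℝ²} (1/(2πσ²))·e^{−|x|²/(2σ²)}·(1 − exp(−α·max(0, (1/α)·(H√t − |x|²/(2σ²))))) dx = 1 − (1 + H√t)·e^{−H√t}. -/

import Mathlib

open MeasureTheory Set

lemma radial_integral (σ a : ℝ) (hσ : 0 < σ) (ha : 0 < a) :
    ∫ y in Ioi (0:ℝ), y * (1 / (2 * Real.pi * σ ^ 2) * Real.exp (-(y ^ 2) / (2 * σ ^ 2)) *
        (1 - Real.exp (-(max 0 (a - y ^ 2 / (2 * σ ^ 2)))))) =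
      1 / (2 * Real.pi) * (1 - (1 + a) * Real.exp (-a)) := by
  set C : ℝ := 1 / (2 * Real.pi * σ ^ 2) with hC
  set r0 : ℝ := Real.sqrt (2 * σ ^ 2 * a) with hr0
  have hs : (0:ℝ) < 2 * σ ^ 2 := by positivity
  have hr0sq : r0 ^ 2 = 2 * σ ^ 2 * a := Real.sq_sqrt (by positivity)
  have hr0pos : 0 < r0 := Real.sqrt_pos.2 (by positivity)
  set g : ℝ → ℝ := fun y => y * (C * Real.exp (-(y ^ 2) / (2 * σ ^ 2)) *
      (1 - Real.exp (-(max 0 (a - y ^ 2 / (2 * σ ^ 2)))))) with hg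
  have hcont : Continuous g := by
    apply Continuous.mul continuous_id
    apply Continuous.mul (by fun_prop)
    exact Continuous.sub continuous_const (by fun_prop)
  have htail : ∀ y ∈ Ioi r0, g y = 0 := by
    intro y hy
    have hy' : r0 < y := hy
    have h1 : 2 * σ ^ 2 * a ≤ y ^ 2 := by
      rw [← hr0sq]; exact pow_le_pow_left₀ hr0pos.le hy'.le 2
    have h2 : a - y ^ 2 / (2 * σ ^ 2) ≤ 0 := by
      rw [sub_nonpos, le_div_iff₀ hs]; linarith
    simp [hg, max_eq_left h2]
  have hIoiZero : ∫ y in Ioi r0, g y = 0 := by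
    rw [setIntegral_congr_fun measurableSet_Ioi htail]; simp
  have hsplit : ∫ y in Ioi (0:ℝ), g y = (∫ y in Ioc 0 r0, g y) + ∫ y in Ioi r0, g y := by
    rw [← setIntegral_union (Ioc_disjoint_Ioi le_rfl) measurableSet_Ioi
      (hcont.integrableOn_Ioc) ?_, Ioc_union_Ioi_eq_Ioi hr0pos.le]
    exact (integrableOn_congr_fun htail measurableSet_Ioi).2 (integrableOn_zero)
  set F : ℝ → ℝ := fun y => C * (-(σ ^ 2) * Real.exp (-(y ^ 2) / (2 * σ ^ 2))
      - Real.exp (-a) * y ^ 2 / 2) with hF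
  have hmain : ∫ y in Ioc 0 r0, g y = C * σ ^ 2 * (1 - Real.exp (-a) - a * Real.exp (-a)) := by
    have heq : ∀ y ∈ Ioc (0:ℝ) r0, g y =
        C * (y * Real.exp (-(y ^ 2) / (2 * σ ^ 2)) - y * Real.exp (-a)) := by
      intro y hy
      have h1 : y ^ 2 ≤ 2 * σ ^ 2 * a := by
        rw [← hr0sq]; exact pow_le_pow_left₀ hy.1.le hy.2 2
      have h2 : 0 ≤ a - y ^ 2 / (2 * σ ^ 2) := by
        rw [sub_nonneg, div_le_iff₀ hs]; linarith
      have h4 : Real.exp (-(a - y ^ 2 / (2 * σ ^ 2))) =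
          Real.exp (y ^ 2 / (2 * σ ^ 2)) * Real.exp (-a) := by
        rw [← Real.exp_add]; ring_nf
      have h3 : Real.exp (-(y ^ 2) / (2 * σ ^ 2)) * Real.exp (y ^ 2 / (2 * σ ^ 2)) = 1 := by
        rw [← Real.exp_add, neg_div, neg_add_cancel, Real.exp_zero]
      rw [hg]
      simp only [max_eq_right h2, h4]
      linear_combination (-(C * y * Real.exp (-a))) * h3
    rw [setIntegral_congr_fun measurableSet_Ioc heq,
      ← intervalIntegral.integral_of_le hr0pos.le]
    have hftc : ∫ y in (0:ℝ)..r0, C * (y * Real.exp (-(y ^ 2) / (2 * σ ^ 2)) - y * Real.exp (-a))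
        = F r0 - F 0 := by
      simp only [hF]
      apply intervalIntegral.integral_eq_sub_of_hasDerivAt
        (f := fun y => C * (-(σ ^ 2) * Real.exp (-(y ^ 2) / (2 * σ ^ 2)) - Real.exp (-a) * y ^ 2 / 2))
      · intro y hy
        have h1 : HasDerivAt (fun y : ℝ => -(y ^ 2) / (2 * σ ^ 2)) (-(2 * y) / (2 * σ ^ 2)) y := by
          have := ((hasDerivAt_pow 2 y).neg).div_const (2 * σ ^ 2)
          simpa using this
        have h2 : HasDerivAt (fun y : ℝ => Real.exp (-(y ^ 2) / (2 * σ ^ 2)))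
            (Real.exp (-(y ^ 2) / (2 * σ ^ 2)) * (-(2 * y) / (2 * σ ^ 2))) y := h1.exp
        have h3 : HasDerivAt (fun y : ℝ => -(σ ^ 2) * Real.exp (-(y ^ 2) / (2 * σ ^ 2))
            - Real.exp (-a) * y ^ 2 / 2)
            (-(σ ^ 2) * (Real.exp (-(y ^ 2) / (2 * σ ^ 2)) * (-(2 * y) / (2 * σ ^ 2)))
              - Real.exp (-a) * (2 * y) / 2) y := by
          have h4 := (h2.const_mul (-(σ ^ 2))).sub
            (((hasDerivAt_pow 2 y).const_mul (Real.exp (-a))).div_const 2)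
          simpa [Pi.sub_def] using h4
        have h5 := h3.const_mul C
        refine h5.congr_deriv ?_
        have hk : σ ^ 2 * (1 / σ ^ 2) = 1 := mul_one_div_cancel (by positivity)
        linear_combination (C * y * Real.exp (-(y ^ 2) / (2 * σ ^ 2))) * hk
      · apply Continuous.intervalIntegrable
        fun_prop
    rw [hftc, hF]
    simp only [hr0sq]
    have h6 : -(2 * σ ^ 2 * a) / (2 * σ ^ 2) = -a := by field_simp
    rw [h6]
    field_simp
    simp only [zero_pow two_ne_zero, zero_div, neg_zero, Real.exp_zero]
    ring
  rw [show (∫ y in Ioi (0:ℝ), y * (C * Real.exp (-(y ^ 2) / (2 * σ ^ 2)) *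
      (1 - Real.exp (-(max 0 (a - y ^ 2 / (2 * σ ^ 2))))))) = ∫ y in Ioi (0:ℝ), g y from rfl,
    hsplit, hIoiZero, hmain, hC]
  have hπ : Real.pi ≠ 0 := Real.pi_ne_zero
  field_simp
  ring

/-- (Example 2, subjective detection probability.) For the circular
normal target density with parameter `σ` on `ℝ²`, the homogeneous exponential detection
function with rate `α`, and the uniformly optimal allocation
`φ*(x,t) = max(0, (1/α)(H√t − |x|²/(2σ²)))` with `H = √(αWv/(πσ²))`, the subjective
detection probability at time `t` equals `1 − (1 + H√t)·e^{−H√t}`. -/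
theorem circular_normal_detection_probability
    (σ α W v t H : ℝ) (hσ : 0 < σ) (hα : 0 < α) (hW : 0 < W) (hv : 0 < v) (ht : 0 < t)
    (hH : H = Real.sqrt (α * W * v / (Real.pi * σ ^ 2))) :
    ∫ x : EuclideanSpace ℝ (Fin 2),
        1 / (2 * Real.pi * σ ^ 2) * Real.exp (-(‖x‖ ^ 2) / (2 * σ ^ 2)) *
          (1 - Real.exp (-(α * max 0 (1 / α * (H * Real.sqrt t - ‖x‖ ^ 2 / (2 * σ ^ 2)))))) =
      1 - (1 + H * Real.sqrt t) * Real.exp (-(H * Real.sqrt t)) := by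
  set a : ℝ := H * Real.sqrt t with haa
  have hHpos : 0 < H := by
    rw [hH]; apply Real.sqrt_pos.2; positivity
  have ha : 0 < a := mul_pos hHpos (Real.sqrt_pos.2 ht)
  have key : ∀ c : ℝ, α * max 0 (1 / α * c) = max 0 c := by
    intro c
    rw [mul_max_of_nonneg _ _ hα.le, mul_zero]
    congr 1
    field_simp
  simp only [key]
  have h2 := MeasureTheory.integral_fun_norm_addHaar (volume : Measure (EuclideanSpace ℝ (Fin 2)))
    (fun r : ℝ => 1 / (2 * Real.pi * σ ^ 2) * Real.exp (-(r ^ 2) / (2 * σ ^ 2)) *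
          (1 - Real.exp (-(max 0 (a - r ^ 2 / (2 * σ ^ 2))))))
  rw [h2]
  have hdim : Module.finrank ℝ (EuclideanSpace ℝ (Fin 2)) = 2 := by simp
  have hball : (volume (Metric.ball (0 : EuclideanSpace ℝ (Fin 2)) 1)).toReal = Real.pi := by
    rw [EuclideanSpace.volume_ball]
    norm_num [Real.Gamma_two, Real.sq_sqrt Real.pi_pos.le]
    all_goals exact Real.pi_pos.le
  rw [hdim, measureReal_def, hball]
  simp only [smul_eq_mul, nsmul_eq_mul, Nat.cast_ofNat, show (2:ℕ) - 1 = 1 from rfl, pow_one]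
  rw [show (∫ y in Set.Ioi (0:ℝ), y * (1 / (2 * Real.pi * σ ^ 2) *
      Real.exp (-(y ^ 2) / (2 * σ ^ 2)) * (1 - Real.exp (-(max 0 (a - y ^ 2 / (2 * σ ^ 2))))))) =
      1 / (2 * Real.pi) * (1 - (1 + a) * Real.exp (-a)) from radial_integral σ a hσ ha]
  field_simp
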